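/- arXiv:2105.10679 — 2 statements merged into one kernel-verified Lean document; each statement's English description precedes it below -/
import Mathlib

section
/- Let P = {e_1,…,e_m} be an atomic Cartesian decomposition of a finite set Ω. Then for every partition R of the index set M = {1,…,m}, the set P^R = {P_I : I ∈ R} is again an atomic Cartesian decomposition of Ω. -/
open Set

def rcomp {Ω : Type*} (r s : Set (Ω × Ω)) : Set (Ω × Ω) :=
  {p | ∃ γ, (p.1, γ) ∈ r ∧ (γ, p.2) ∈ s}

def rconv {Ω : Type*} (r : Set (Ω × Ω)) : Set (Ω × Ω) := {p | (p.2, p.1) ∈ r}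

def rdiag (Ω : Type*) : Set (Ω × Ω) := {p | p.1 = p.2}

def IsEquivRel {Ω : Type*} (e : Set (Ω × Ω)) : Prop :=
  Equivalence (fun a b => (a, b) ∈ e)

/-- The smallest equivalence relation containing `r`. -/
def eqvClosure {Ω : Type*} (r : Set (Ω × Ω)) : Set (Ω × Ω) :=
  ⋂₀ {e | IsEquivRel e ∧ r ⊆ e}

/-- Join of two equivalence relations. -/
def rjoin {Ω : Type*} (e f : Set (Ω × Ω)) : Set (Ω × Ω) := eqvClosure (e ∪ f)

def IsClass {Ω : Type*} (e : Set (Ω × Ω)) (Δ : Set Ω) : Prop :=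
  ∃ α, Δ = {β | (α, β) ∈ e}

def setoidRel {Ω : Type*} (e : Setoid Ω) : Set (Ω × Ω) := {p | e.r p.1 p.2}

/-- The relation induced on the quotient `Ω/e` by a relation `r` on `Ω`. -/
def qmap {Ω : Type*} (e : Setoid Ω) (r : Set (Ω × Ω)) :
    Set (Quotient e × Quotient e) :=
  {p | ∃ a b : Ω, Quotient.mk e a = p.1 ∧ Quotient.mk e b = p.2 ∧ (a, b) ∈ r}

/-- Tensor product of relations. -/
def tensorRel {m : ℕ} {Ω : Fin m → Type*} (s : ∀ i, Set (Ω i × Ω i)) :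
    Set ((∀ i, Ω i) × (∀ i, Ω i)) :=
  {p | ∀ i, (p.1 i, p.2 i) ∈ s i}

def tensor2 {Ω₁ Ω₂ : Type*} (s₁ : Set (Ω₁ × Ω₁)) (s₂ : Set (Ω₂ × Ω₂)) :
    Set ((Ω₁ × Ω₂) × (Ω₁ × Ω₂)) :=
  {p | (p.1.1, p.2.1) ∈ s₁ ∧ (p.1.2, p.2.2) ∈ s₂}

/-- `PP e I` is the join of the equivalence relations `e i`, `i ∈ I`. -/
def PP {Ω : Type*} {m : ℕ} (e : Fin m → Set (Ω × Ω)) (I : Set (Fin m)) :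
    Set (Ω × Ω) :=
  eqvClosure (⋃ i ∈ I, e i)

/-- An atomic Cartesian decomposition, given as a family of equivalence relations. -/
def IsACDfam {Ω : Type*} {m : ℕ} (e : Fin m → Set (Ω × Ω)) : Prop :=
  0 < m ∧ (∀ i, IsEquivRel (e i)) ∧ (∀ i, e i ≠ rdiag Ω) ∧
  (∀ i j, rcomp (e i) (e j) = rcomp (e j) (e i)) ∧
  (∀ i, e i ∩ PP e ({i}ᶜ) = rdiag Ω) ∧
  (∀ i, rjoin (e i) (PP e ({i}ᶜ)) = Set.univ)

/-- Join of a set of relations. -/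
def joinAll {Ω : Type*} (B : Set (Set (Ω × Ω))) : Set (Ω × Ω) := eqvClosure (⋃₀ B)

/-- The `P`-complement of `e`: the join of the members of `P` other than `e`. -/
def pcompl {Ω : Type*} (P : Set (Set (Ω × Ω))) (e : Set (Ω × Ω)) : Set (Ω × Ω) :=
  joinAll (P \ {e})

/-- An atomic Cartesian decomposition, given as a set of equivalence relations. -/
def IsACD {Ω : Type*} (P : Set (Set (Ω × Ω))) : Prop :=
  P.Nonempty ∧ (∀ e ∈ P, IsEquivRel e ∧ e ≠ rdiag Ω) ∧
  (∀ e ∈ P, ∀ f ∈ P, rcomp e f = rcomp f e) ∧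
  (∀ e ∈ P, e ∩ pcompl P e = rdiag Ω ∧ rjoin e (pcompl P e) = Set.univ)

def IsPartitionOf {α : Type*} (P : Set α) (C : Set (Set α)) : Prop :=
  (∀ B ∈ C, B.Nonempty) ∧ (∀ B ∈ C, ∀ B' ∈ C, B ≠ B' → Disjoint B B') ∧ ⋃₀ C = P

/-- A coherent configuration on `Ω`. -/
structure CohCfg (Ω : Type*) where
  S : Set (Set (Ω × Ω))
  empty_not_mem : ∅ ∉ S
  cover : ∀ p : Ω × Ω, ∃ s ∈ S, p ∈ s
  pairwise_disjoint : ∀ s ∈ S, ∀ t ∈ S, s ≠ t → Disjoint s t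
  diag_union : ∀ s ∈ S, (s ∩ rdiag Ω).Nonempty → s ⊆ rdiag Ω
  conv_mem : ∀ s ∈ S, rconv s ∈ S
  inter_const : ∀ r ∈ S, ∀ s ∈ S, ∀ t ∈ S, ∀ p ∈ t, ∀ q ∈ t,
    ({γ : Ω | (p.1, γ) ∈ r ∧ (γ, p.2) ∈ s}).ncard
      = ({γ : Ω | (q.1, γ) ∈ r ∧ (γ, q.2) ∈ s}).ncard

/-- The valency of a basis relation (the common size of the rows over the left support). -/
noncomputable def valency {Ω : Type*} (s : Set (Ω × Ω)) : ℕ :=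
  sSup ((fun α => ({β | (α, β) ∈ s} : Set Ω).ncard) '' {α | ∃ β, (α, β) ∈ s})

def IsThick {Ω : Type*} (X : CohCfg Ω) : Prop :=
  ∀ s ∈ X.S, Disjoint s (rdiag Ω) → ¬(valency s = 1 ∧ valency (rconv s) = 1)

def IsParabolic {Ω : Type*} (X : CohCfg Ω) (e : Set (Ω × Ω)) : Prop :=
  IsEquivRel e ∧ ∀ s ∈ X.S, (s ∩ e).Nonempty → s ⊆ e

def Perp {Ω : Type*} (X : CohCfg Ω) (e f : Set (Ω × Ω)) : Prop :=
  ∀ x ∈ X.S, x ⊆ e → ∀ y ∈ X.S, y ⊆ f → (rcomp x y).Nonempty → rcomp x y ∈ X.S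

def Redundant {Ω : Type*} (X : CohCfg Ω) (s : Set (Ω × Ω)) : Prop :=
  ∃ x ∈ X.S, ∃ y ∈ X.S, Disjoint x (rdiag Ω) ∧ Disjoint y (rdiag Ω) ∧
    s = rcomp x y ∧ eqvClosure x ∩ eqvClosure y = rdiag Ω
section Helpers

variable {Ω : Type*}

lemma isEquiv_eqvClosure (r : Set (Ω × Ω)) : IsEquivRel (eqvClosure r) := by
  constructor
  · intro a t ht; exact ht.1.refl a
  · intro a b h t ht; exact ht.1.symm (h t ht)
  · intro a b c h1 h2 t ht; exact ht.1.trans (h1 t ht) (h2 t ht)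

lemma subset_eqvClosure (r : Set (Ω × Ω)) : r ⊆ eqvClosure r := by
  intro p hp t ht; exact ht.2 hp

lemma eqvClosure_min {r e : Set (Ω × Ω)} (he : IsEquivRel e) (hr : r ⊆ e) :
    eqvClosure r ⊆ e := Set.sInter_subset_of_mem ⟨he, hr⟩

lemma eqvClosure_mono {r s : Set (Ω × Ω)} (h : r ⊆ s) :
    eqvClosure r ⊆ eqvClosure s :=
  eqvClosure_min (isEquiv_eqvClosure s) (h.trans (subset_eqvClosure s))

lemma eqvClosure_eq_self {e : Set (Ω × Ω)} (he : IsEquivRel e) :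
    eqvClosure e = e :=
  Set.Subset.antisymm (eqvClosure_min he Set.Subset.rfl) (subset_eqvClosure e)

lemma eqvClosure_eq_of {A X : Set (Ω × Ω)} (h1 : A ⊆ X) (h2 : X ⊆ eqvClosure A) :
    eqvClosure X = eqvClosure A :=
  Set.Subset.antisymm (eqvClosure_min (isEquiv_eqvClosure A) h2) (eqvClosure_mono h1)

lemma rdiag_subset_of_equiv {e : Set (Ω × Ω)} (he : IsEquivRel e) :
    rdiag Ω ⊆ e := by
  rintro ⟨a, b⟩ (h : a = b); subst h; exact he.refl a

lemma eqvClosure_empty : eqvClosure (∅ : Set (Ω × Ω)) = rdiag Ω := by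
  refine Set.Subset.antisymm (eqvClosure_min ?_ (Set.empty_subset _))
    (rdiag_subset_of_equiv (isEquiv_eqvClosure _))
  constructor
  · intro a; rfl
  · intro a b h; exact h.symm
  · intro a b c h1 h2; exact h1.trans h2

lemma joinAll_mono {B B' : Set (Set (Ω × Ω))} (h : B ⊆ B') :
    joinAll B ⊆ joinAll B' :=
  eqvClosure_mono (Set.sUnion_mono h)

lemma isEquiv_joinAll (B : Set (Set (Ω × Ω))) : IsEquivRel (joinAll B) :=
  isEquiv_eqvClosure _

lemma joinAll_empty : joinAll (∅ : Set (Set (Ω × Ω))) = rdiag Ω := by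
  simp only [joinAll, Set.sUnion_empty]; exact eqvClosure_empty

lemma subset_joinAll {B : Set (Set (Ω × Ω))} {e : Set (Ω × Ω)} (he : e ∈ B) :
    e ⊆ joinAll B :=
  (Set.subset_sUnion_of_mem he).trans (subset_eqvClosure _)

lemma eqvClosure_union_right (s t : Set (Ω × Ω)) :
    eqvClosure (s ∪ eqvClosure t) = eqvClosure (s ∪ t) :=
  eqvClosure_eq_of
    (Set.union_subset_union_right s (subset_eqvClosure t))
    (Set.union_subset ((Set.subset_union_left).trans (subset_eqvClosure _))
      (eqvClosure_mono Set.subset_union_right))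

lemma eqvClosure_union_left (s t : Set (Ω × Ω)) :
    eqvClosure (eqvClosure s ∪ t) = eqvClosure (s ∪ t) :=
  eqvClosure_eq_of
    (Set.union_subset_union_left t (subset_eqvClosure s))
    (Set.union_subset (eqvClosure_mono Set.subset_union_left)
      ((Set.subset_union_right).trans (subset_eqvClosure _)))

lemma rjoin_eq (s t : Set (Ω × Ω)) :
    rjoin (eqvClosure s) (eqvClosure t) = eqvClosure (s ∪ t) := by
  unfold rjoin
  rw [eqvClosure_union_right, eqvClosure_union_left]

lemma joinAll_insert (e : Set (Ω × Ω)) (B : Set (Set (Ω × Ω))) (he : IsEquivRel e) :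
    joinAll (insert e B) = rjoin e (joinAll B) := by
  unfold joinAll rjoin
  rw [Set.sUnion_insert, eqvClosure_union_right]

lemma rcomp_assoc (r s t : Set (Ω × Ω)) :
    rcomp (rcomp r s) t = rcomp r (rcomp s t) := by
  ext ⟨a, b⟩
  constructor
  · rintro ⟨γ, ⟨δ, h1, h2⟩, h3⟩; exact ⟨δ, h1, γ, h2, h3⟩
  · rintro ⟨γ, h1, δ, h2, h3⟩; exact ⟨δ, ⟨γ, h1, h2⟩, h3⟩

lemma rcomp_diag_left (f : Set (Ω × Ω)) : rcomp (rdiag Ω) f = f := by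
  ext ⟨a, b⟩
  constructor
  · rintro ⟨γ, (h1 : a = γ), h2⟩; subst h1; exact h2
  · intro h; exact ⟨a, rfl, h⟩

lemma rcomp_diag_right (f : Set (Ω × Ω)) : rcomp f (rdiag Ω) = f := by
  ext ⟨a, b⟩
  constructor
  · rintro ⟨γ, h1, (h2 : γ = b)⟩; subst h2; exact h1
  · intro h; exact ⟨b, h, rfl⟩

lemma isEquiv_rcomp {e f : Set (Ω × Ω)} (he : IsEquivRel e) (hf : IsEquivRel f)
    (hc : rcomp e f = rcomp f e) : IsEquivRel (rcomp e f) := by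
  constructor
  · intro a; exact ⟨a, he.refl a, hf.refl a⟩
  · rintro a b ⟨γ, h1, h2⟩
    have : (b, a) ∈ rcomp f e := ⟨γ, hf.symm h2, he.symm h1⟩
    rw [hc]; exact this
  · rintro a b c ⟨γ, h1, h2⟩ ⟨δ, h3, h4⟩
    have hgd : (γ, δ) ∈ rcomp f e := ⟨b, h2, h3⟩
    rw [← hc] at hgd
    obtain ⟨μ, h5, h6⟩ := hgd
    exact ⟨μ, he.trans h1 h5, hf.trans h6 h4⟩

lemma rjoin_eq_rcomp {e f : Set (Ω × Ω)} (he : IsEquivRel e) (hf : IsEquivRel f)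
    (hc : rcomp e f = rcomp f e) : rjoin e f = rcomp e f := by
  refine Set.Subset.antisymm (eqvClosure_min (isEquiv_rcomp he hf hc) ?_) ?_
  · refine Set.union_subset ?_ ?_
    · rintro ⟨a, b⟩ h; exact ⟨b, h, hf.refl b⟩
    · rintro ⟨a, b⟩ h; exact ⟨a, he.refl a, h⟩
  · rintro ⟨a, b⟩ ⟨γ, h1, h2⟩
    have hE := isEquiv_eqvClosure (e ∪ f)
    exact hE.trans (subset_eqvClosure _ (Set.mem_union_left _ h1))
      (subset_eqvClosure _ (Set.mem_union_right _ h2))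

/-- Main finite-join lemma: join of finitely many pairwise commuting equivalence
relations is an equivalence, and commutes with anything commuting with members. -/
lemma joinAll_props {B : Set (Set (Ω × Ω))} (hfin : B.Finite) :
    (∀ e ∈ B, IsEquivRel e) → (∀ e ∈ B, ∀ f ∈ B, rcomp e f = rcomp f e) →
    (∀ f : Set (Ω × Ω), IsEquivRel f → (∀ e ∈ B, rcomp e f = rcomp f e) →
      rcomp (joinAll B) f = rcomp f (joinAll B)) ∧
    (∀ e : Set (Ω × Ω), IsEquivRel e → (∀ g ∈ B, rcomp g e = rcomp e g) →
      joinAll (insert e B) = rcomp e (joinAll B)) := by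
  refine Set.Finite.induction_on
    (motive := fun B _ => (∀ e ∈ B, IsEquivRel e) → (∀ e ∈ B, ∀ f ∈ B, rcomp e f = rcomp f e) →
      (∀ f : Set (Ω × Ω), IsEquivRel f → (∀ e ∈ B, rcomp e f = rcomp f e) →
        rcomp (joinAll B) f = rcomp f (joinAll B)) ∧
      (∀ e : Set (Ω × Ω), IsEquivRel e → (∀ g ∈ B, rcomp g e = rcomp e g) →
        joinAll (insert e B) = rcomp e (joinAll B))) B hfin ?_ ?_
  · intro _ _
    constructor
    · intro f _ _; rw [joinAll_empty, rcomp_diag_left, rcomp_diag_right]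
    · intro e heq _
      rw [joinAll_empty, rcomp_diag_right]
      unfold joinAll
      rw [Set.sUnion_insert, Set.sUnion_empty, Set.union_empty, eqvClosure_eq_self heq]
  · intro a s ha hs ih hEq hComm
    have hEq' : ∀ e ∈ s, IsEquivRel e := fun e hes => hEq e (Set.mem_insert_of_mem _ hes)
    have hComm' : ∀ e ∈ s, ∀ f ∈ s, rcomp e f = rcomp f e := fun e hes f hfs =>
      hComm e (Set.mem_insert_of_mem _ hes) f (Set.mem_insert_of_mem _ hfs)
    obtain ⟨ihComm, ihIns⟩ := ih hEq' hComm'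
    have haEq : IsEquivRel a := hEq a (Set.mem_insert _ _)
    have haComm : ∀ g ∈ s, rcomp g a = rcomp a g := fun g hgs =>
      hComm g (Set.mem_insert_of_mem _ hgs) a (Set.mem_insert _ _)
    have hjs : IsEquivRel (joinAll s) := isEquiv_joinAll s
    have hkey : joinAll (insert a s) = rcomp a (joinAll s) := ihIns a haEq haComm
    have hca : rcomp (joinAll s) a = rcomp a (joinAll s) :=
      ihComm a haEq (fun e hes => haComm e hes)
    have hins_equiv : IsEquivRel (joinAll (insert a s)) := isEquiv_joinAll _
    constructor
    · intro f hf hcf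
      have hcaf : rcomp a f = rcomp f a := hcf a (Set.mem_insert _ _)
      have hcsf : rcomp (joinAll s) f = rcomp f (joinAll s) :=
        ihComm f hf (fun e hes => hcf e (Set.mem_insert_of_mem _ hes))
      rw [hkey, rcomp_assoc, hcsf, ← rcomp_assoc, hcaf, rcomp_assoc]
    · intro e heq hce
      have hcea : rcomp a e = rcomp e a := hce a (Set.mem_insert _ _)
      have hces : rcomp (joinAll s) e = rcomp e (joinAll s) :=
        ihComm e heq (fun g hgs => hce g (Set.mem_insert_of_mem _ hgs))
      have h1 : joinAll (insert e (insert a s)) = rjoin e (joinAll (insert a s)) :=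
        joinAll_insert e _ heq
      rw [h1, hkey]
      have hequiv_as : IsEquivRel (rcomp a (joinAll s)) := by
        rw [← hkey]; exact hins_equiv
      have hcomm_e_as : rcomp e (rcomp a (joinAll s)) = rcomp (rcomp a (joinAll s)) e := by
        rw [← rcomp_assoc, ← hcea, rcomp_assoc, ← hces, ← rcomp_assoc]
      exact rjoin_eq_rcomp heq hequiv_as hcomm_e_as

lemma sUnion_diff_singleton_insert {e : Set (Ω × Ω)} {B : Set (Set (Ω × Ω))}
    (he : e ∈ B) : insert e (B \ {e}) = B := by
  ext x; simp only [Set.mem_insert_iff, Set.mem_diff, Set.mem_singleton_iff]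
  constructor
  · rintro (rfl | ⟨hx, _⟩) <;> [exact he; exact hx]
  · intro hx; by_cases hxe : x = e
    · left; exact hxe
    · right; exact ⟨hx, hxe⟩

lemma joinAll_univ_of_ACD {P : Set (Set (Ω × Ω))} (hP : IsACD P) :
    joinAll P = Set.univ := by
  obtain ⟨⟨e, heP⟩, hEq, _, hC⟩ := hP
  have h := (hC e heP).2
  have : rjoin e (pcompl P e) = joinAll P := by
    unfold pcompl joinAll rjoin
    rw [eqvClosure_union_right]
    congr 1
    rw [← Set.sUnion_insert, sUnion_diff_singleton_insert heP]
  rw [← this, h]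

/-- Key intersection lemma. -/
lemma joinAll_inter_diag {P : Set (Set (Ω × Ω))} (hP : IsACD P) (hPfin : P.Finite)
    {B : Set (Set (Ω × Ω))} (hBfin : B.Finite) (hB : B ⊆ P) :
    joinAll B ∩ joinAll (P \ B) = rdiag Ω := by
  obtain ⟨hne, hEqD, hComm, hC⟩ := hP
  refine Set.Finite.induction_on
    (motive := fun B _ => B ⊆ P → joinAll B ∩ joinAll (P \ B) = rdiag Ω) B hBfin ?_ ?_ hB
  · intro _
    rw [joinAll_empty, Set.diff_empty]
    exact Set.inter_eq_left.mpr (rdiag_subset_of_equiv (isEquiv_joinAll P))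
  · intro a s ha hs ih hB
    have haP : a ∈ P := hB (Set.mem_insert _ _)
    have hsP : s ⊆ P := fun x hx => hB (Set.mem_insert_of_mem _ hx)
    have ihd : joinAll s ∩ joinAll (P \ s) = rdiag Ω := ih hsP
    have hprops := joinAll_props hs (fun e hes => (hEqD e (hsP hes)).1)
      (fun e hes f hfs => hComm e (hsP hes) f (hsP hfs))
    have hkey : joinAll (insert a s) = rcomp a (joinAll s) :=
      hprops.2 a (hEqD a haP).1
        (fun g hgs => hComm g (hsP hgs) a haP)
    refine Set.Subset.antisymm ?_ ?_
    · rintro ⟨α, β⟩ ⟨h1, h2⟩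
      rw [hkey] at h1
      obtain ⟨γ, hag, hgb⟩ := h1
      -- hag : (α, γ) ∈ a, hgb : (γ, β) ∈ joinAll s
      have hPe : IsEquivRel (joinAll (P \ {a})) := isEquiv_joinAll _
      have hsub1 : joinAll s ⊆ joinAll (P \ {a}) := by
        refine joinAll_mono (fun x hx => ⟨hsP hx, ?_⟩)
        rintro rfl; exact ha hx
      have hsub2 : joinAll (P \ insert a s) ⊆ joinAll (P \ {a}) := by
        refine joinAll_mono (Set.diff_subset_diff_right ?_)
        intro x hx; rw [Set.mem_singleton_iff] at hx; subst hx
        exact Set.mem_insert _ _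
      have hag2 : (α, γ) ∈ joinAll (P \ {a}) :=
        hPe.trans (hsub2 h2) (hPe.symm (hsub1 hgb))
      have : (α, γ) ∈ a ∩ pcompl P a := ⟨hag, hag2⟩
      rw [(hC a haP).1] at this
      have hgamma : α = γ := this
      subst hgamma
      have h2' : (α, β) ∈ joinAll (P \ s) :=
        joinAll_mono (Set.diff_subset_diff_right (Set.subset_insert a s)) h2
      have : (α, β) ∈ joinAll s ∩ joinAll (P \ s) := ⟨hgb, h2'⟩
      rw [ihd] at this; exact this
    · intro p hp
      exact ⟨rdiag_subset_of_equiv (isEquiv_joinAll _) hp,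
        rdiag_subset_of_equiv (isEquiv_joinAll _) hp⟩

lemma joinAll_ne_diag {P : Set (Set (Ω × Ω))} (hP : IsACD P)
    {B : Set (Set (Ω × Ω))} (hB : B ⊆ P) (hBne : B.Nonempty) :
    joinAll B ≠ rdiag Ω := by
  obtain ⟨e, heB⟩ := hBne
  obtain ⟨_, hEqD, _, _⟩ := hP
  intro hcontra
  have h1 : e ⊆ joinAll B := subset_joinAll heB
  have h2 : rdiag Ω ⊆ e := rdiag_subset_of_equiv (hEqD e (hB heB)).1
  exact (hEqD e (hB heB)).2 (Set.Subset.antisymm (hcontra ▸ h1) h2)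

lemma joinAll_inj {P : Set (Set (Ω × Ω))} (hP : IsACD P)
    {C : Set (Set (Set (Ω × Ω)))} (hC : IsPartitionOf P C)
    {B B' : Set (Set (Ω × Ω))} (hB : B ∈ C) (hB' : B' ∈ C)
    (h : joinAll B = joinAll B') : B = B' := by
  by_contra hne
  obtain ⟨hCne, hCdisj, hCun⟩ := hC
  obtain ⟨e, heB⟩ := hCne B hB
  have heP : e ∈ P := hCun ▸ ⟨B, hB, heB⟩
  have hdisj := hCdisj B hB B' hB' hne
  have heB' : e ∉ B' := fun h' => (Set.disjoint_left.mp hdisj heB) h'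
  have hB'sub : B' ⊆ P \ {e} := by
    intro x hx
    refine ⟨hCun ▸ ⟨B', hB', hx⟩, ?_⟩
    rintro rfl; exact heB' hx
  have h1 : e ⊆ pcompl P e := by
    calc e ⊆ joinAll B := subset_joinAll heB
    _ = joinAll B' := h
    _ ⊆ joinAll (P \ {e}) := joinAll_mono hB'sub
  obtain ⟨_, hEqD, _, hCond⟩ := hP
  have h2 := (hCond e heP).1
  have h3 : e = rdiag Ω := by
    rw [← h2]
    exact (Set.inter_eq_left.mpr h1).symm
  exact (hEqD e heP).2 h3

lemma joinAll_image_eq {D : Set (Set (Set (Ω × Ω)))} :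
    joinAll ((fun B => joinAll B) '' D) = joinAll (⋃₀ D) := by
  unfold joinAll
  apply eqvClosure_eq_of
  · rintro p ⟨t, ⟨d, hd, ht⟩, hpt⟩
    exact ⟨eqvClosure (⋃₀ d), ⟨d, hd, rfl⟩, subset_eqvClosure _ ⟨t, ht, hpt⟩⟩
  · rintro p ⟨x, ⟨d, hd, rfl⟩, hpx⟩
    refine eqvClosure_mono ?_ hpx
    exact Set.sUnion_subset (fun t ht => Set.subset_sUnion_of_mem ⟨d, hd, ht⟩)

end Helpers

/-- for every partition `C` of an atomic Cartesian decomposition `P`,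
the set of joins of the blocks is again an atomic Cartesian decomposition. -/
theorem stmt9 {Ω : Type*} [Fintype Ω] (P : Set (Set (Ω × Ω)))
    (C : Set (Set (Set (Ω × Ω))))
    (hP : IsACD P) (hC : IsPartitionOf P C) :
    IsACD {g | ∃ B ∈ C, g = joinAll B} := by
  have hPfin : P.Finite := Set.toFinite P
  obtain ⟨hPne, hEqD, hComm, hCond⟩ := hP
  obtain ⟨hCne, hCdisj, hCun⟩ := hC
  have hBsub : ∀ B ∈ C, B ⊆ P := fun B hB x hx => hCun ▸ ⟨B, hB, hx⟩
  have hBfin : ∀ B ∈ C, B.Finite := fun B hB => hPfin.subset (hBsub B hB)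
  -- commuting of joins
  have hcommJ : ∀ B ∈ C, ∀ f : Set (Ω × Ω), IsEquivRel f →
      (∀ e ∈ B, rcomp e f = rcomp f e) →
      rcomp (joinAll B) f = rcomp f (joinAll B) := by
    intro B hB f hf hcf
    exact (joinAll_props (hBfin B hB) (fun e he => (hEqD e (hBsub B hB he)).1)
      (fun e he g hg => hComm e (hBsub B hB he) g (hBsub B hB hg))).1 f hf hcf
  refine ⟨?_, ?_, ?_, ?_⟩
  · obtain ⟨e, heP⟩ := hPne
    rw [← hCun] at heP
    obtain ⟨B, hB, _⟩ := heP
    exact ⟨joinAll B, B, hB, rfl⟩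
  · rintro g ⟨B, hB, rfl⟩
    exact ⟨isEquiv_joinAll B, joinAll_ne_diag ⟨hPne, hEqD, hComm, hCond⟩
      (hBsub B hB) (hCne B hB)⟩
  · rintro g ⟨B, hB, rfl⟩ f ⟨B', hB', rfl⟩
    refine hcommJ B hB (joinAll B') (isEquiv_joinAll B') ?_
    intro e heB
    exact (hcommJ B' hB' e (hEqD e (hBsub B hB heB)).1
      (fun x hxB' => hComm x (hBsub B' hB' hxB') e (hBsub B hB heB))).symm
  · rintro g ⟨B, hB, rfl⟩
    -- identify the complement
    have hinj : ∀ B' ∈ C, joinAll B' = joinAll B → B' = B := fun B' hB' h =>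
      joinAll_inj ⟨hPne, hEqD, hComm, hCond⟩ ⟨hCne, hCdisj, hCun⟩ hB' hB h
    have hQdiff : {g | ∃ B ∈ C, g = joinAll B} \ {joinAll B}
        = (fun B' => joinAll B') '' (C \ {B}) := by
      ext x
      simp only [Set.mem_diff, Set.mem_setOf_eq, Set.mem_singleton_iff, Set.mem_image]
      constructor
      · rintro ⟨⟨B', hB', rfl⟩, hne⟩
        exact ⟨B', ⟨hB', fun h => hne (h ▸ rfl)⟩, rfl⟩
      · rintro ⟨B', ⟨hB', hneB⟩, rfl⟩
        exact ⟨⟨B', hB', rfl⟩, fun h => hneB (hinj B' hB' h)⟩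
    have hsU : ⋃₀ (C \ {B}) = P \ B := by
      ext x
      constructor
      · rintro ⟨B', ⟨hB', hneB⟩, hxB'⟩
        refine ⟨hBsub B' hB' hxB', fun hxB => ?_⟩
        exact Set.disjoint_left.mp (hCdisj B' hB' B hB hneB) hxB' hxB
      · rintro ⟨hxP, hxB⟩
        rw [← hCun] at hxP
        obtain ⟨B', hB', hxB'⟩ := hxP
        refine ⟨B', ⟨hB', fun h => hxB (h ▸ hxB')⟩, hxB'⟩
    have hpc : pcompl {g | ∃ B ∈ C, g = joinAll B} (joinAll B) = joinAll (P \ B) := by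
      unfold pcompl
      rw [hQdiff, joinAll_image_eq, hsU]
    rw [hpc]
    constructor
    · exact joinAll_inter_diag ⟨hPne, hEqD, hComm, hCond⟩ hPfin
        (hBfin B hB) (hBsub B hB)
    · show rjoin (joinAll B) (joinAll (P \ B)) = Set.univ
      unfold joinAll
      rw [rjoin_eq, ← Set.sUnion_union, Set.union_diff_cancel (hBsub B hB)]
      have : eqvClosure (⋃₀ P) = joinAll P := rfl
      rw [this, joinAll_univ_of_ACD ⟨hPne, hEqD, hComm, hCond⟩]
end

section
/- Let 𝒳 = (Ω,S) be a coherent configuration and s, x, y ∈ S with x, y irreflexive, s = x·y and ⟨x⟩ ∧ ⟨y⟩ = 1_Ω. Then d(s) = d(x)·d(y), where d(r) = n_r · n_{r*} is the product of the valencies of r and its converse. -/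
open Set

section Aux

variable {Ω : Type*}

lemma mem_eqvClosure_iff {r : Set (Ω × Ω)} {p : Ω × Ω} :
    p ∈ eqvClosure r ↔ ∀ e, IsEquivRel e → r ⊆ e → p ∈ e := by
  constructor
  · intro h e he hre
    exact h e ⟨he, hre⟩
  · intro h e he
    exact h e he.1 he.2

lemma eqvClosure_trans_left {x : Set (Ω × Ω)} {a b c : Ω}
    (h1 : (a, b) ∈ x) (h2 : (a, c) ∈ x) : (b, c) ∈ eqvClosure x := by
  rw [mem_eqvClosure_iff]
  intro e he hre
  exact he.trans (he.symm (hre h1)) (hre h2)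

lemma eqvClosure_trans_right {y : Set (Ω × Ω)} {a b c : Ω}
    (h1 : (a, c) ∈ y) (h2 : (b, c) ∈ y) : (a, b) ∈ eqvClosure y := by
  rw [mem_eqvClosure_iff]
  intro e he hre
  exact he.trans (hre h1) (he.symm (hre h2))

lemma eqvClosure_rconv (x : Set (Ω × Ω)) : eqvClosure (rconv x) = eqvClosure x := by
  apply subset_antisymm
  · intro p hp
    rw [mem_eqvClosure_iff] at hp ⊢
    intro e he hre
    refine hp e he ?_
    intro q hq
    exact he.symm (hre hq)
  · intro p hp
    rw [mem_eqvClosure_iff] at hp ⊢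
    intro e he hre
    refine hp e he ?_
    intro q hq
    exact he.symm (hre (show (q.2, q.1) ∈ rconv x from hq))

variable [Fintype Ω]

/-- The row size of a basis relation is constant on its left support. -/
lemma row_ncard_const (X : CohCfg Ω) {s : Set (Ω × Ω)} (hs : s ∈ X.S) {α α' : Ω}
    (hα : ∃ β, (α, β) ∈ s) (hα' : ∃ β, (α', β) ∈ s) :
    ({β | (α, β) ∈ s} : Set Ω).ncard = ({β | (α', β) ∈ s} : Set Ω).ncard := by
  obtain ⟨β, hβ⟩ := hα
  obtain ⟨β', hβ'⟩ := hα'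
  obtain ⟨t, htS, htm⟩ := X.cover (α, α)
  have htd : t ⊆ rdiag Ω := X.diag_union t htS ⟨(α, α), htm, rfl⟩
  obtain ⟨t', ht'S, ht'm⟩ := X.cover (α', α')
  have hteq : (α', α') ∈ t := by
    by_contra hne'
    have hne : t ≠ t' := fun h => hne' (h ▸ ht'm)
    have h1 := X.inter_const t htS s hs s hs (α, β) hβ (α', β') hβ'
    have e1 : {γ : Ω | (α, γ) ∈ t ∧ (γ, β) ∈ s} = {α} := by
      ext γ
      constructor
      · rintro ⟨h, -⟩
        exact (htd h).symm
      · rintro rfl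
        exact ⟨htm, hβ⟩
    have e2 : {γ : Ω | (α', γ) ∈ t ∧ (γ, β') ∈ s} = ∅ := by
      ext γ
      simp only [Set.mem_setOf_eq, Set.mem_empty_iff_false, iff_false, not_and]
      intro h
      have hg : α' = γ := htd h
      subst hg
      exact fun _ => hne' h
    have h1' : ({γ : Ω | (α, γ) ∈ t ∧ (γ, β) ∈ s}).ncard
        = ({γ : Ω | (α', γ) ∈ t ∧ (γ, β') ∈ s}).ncard := h1
    rw [e1, e2] at h1'
    simp at h1'
  have h2 := X.inter_const s hs (rconv s) (X.conv_mem s hs) t htS (α, α) htm (α', α') hteq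
  have e3 : ∀ a : Ω, {γ : Ω | (a, γ) ∈ s ∧ (γ, a) ∈ rconv s} = {γ : Ω | (a, γ) ∈ s} :=
    fun a => Set.ext fun γ => ⟨fun h => h.1, fun h => ⟨h, h⟩⟩
  have h2' : ({γ : Ω | (α, γ) ∈ s ∧ (γ, α) ∈ rconv s}).ncard
      = ({γ : Ω | (α', γ) ∈ s ∧ (γ, α') ∈ rconv s}).ncard := h2
  rwa [e3, e3] at h2'

lemma valency_eq_row (X : CohCfg Ω) {s : Set (Ω × Ω)} (hs : s ∈ X.S) {α : Ω}
    (hα : ∃ β, (α, β) ∈ s) : valency s = ({β | (α, β) ∈ s} : Set Ω).ncard := by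
  have himg : (fun α' => ({β | (α', β) ∈ s} : Set Ω).ncard) '' {α' | ∃ β, (α', β) ∈ s}
      = {({β | (α, β) ∈ s} : Set Ω).ncard} := by
    apply Set.eq_singleton_iff_nonempty_unique_mem.2
    constructor
    · exact ⟨_, ⟨α, hα, rfl⟩⟩
    · rintro n ⟨α', hα', rfl⟩
      exact row_ncard_const X hs hα' hα
  rw [valency, himg, csSup_singleton]

lemma key_valency (X : CohCfg Ω) (s x y : Set (Ω × Ω))
    (hs : s ∈ X.S) (hx : x ∈ X.S) (hy : y ∈ X.S)
    (hcomp : s = rcomp x y)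
    (hmeet : eqvClosure x ∩ eqvClosure y = rdiag Ω) :
    valency s = valency x * valency y := by
  classical
  have hsne : s.Nonempty := by
    rw [Set.nonempty_iff_ne_empty]
    intro h
    exact X.empty_not_mem (h ▸ hs)
  obtain ⟨⟨α₀, δ₀⟩, h0⟩ := hsne
  obtain ⟨β₀, hb1, hb2⟩ : ∃ β, (α₀, β) ∈ x ∧ (β, δ₀) ∈ y := by
    rw [hcomp] at h0
    exact h0
  have hconvx := X.conv_mem x hx
  have hconvs := X.conv_mem s hs
  have hset : ∀ (α' β' : Ω), (α', β') ∈ x →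
      {γ : Ω | (β', γ) ∈ y ∧ (γ, α') ∈ rconv s} = {γ : Ω | (β', γ) ∈ y} := by
    intro α' β' h'
    ext γ
    constructor
    · exact fun h => h.1
    · intro h
      refine ⟨h, show (α', γ) ∈ s from ?_⟩
      rw [hcomp]
      exact ⟨β', h', h⟩
  have Nconst : ∀ α β : Ω, (α, β) ∈ x →
      ({γ : Ω | (β, γ) ∈ y} : Set Ω).ncard = valency y := by
    intro α β hab
    have h1 := X.inter_const y hy (rconv s) hconvs (rconv x) hconvx (β, α) hab (β₀, α₀) hb1
    have h1' : ({γ : Ω | (β, γ) ∈ y ∧ (γ, α) ∈ rconv s}).ncard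
        = ({γ : Ω | (β₀, γ) ∈ y ∧ (γ, α₀) ∈ rconv s}).ncard := h1
    rw [hset α β hab, hset α₀ β₀ hb1] at h1'
    rw [h1', ← valency_eq_row X hy ⟨δ₀, hb2⟩]
  -- decomposition of the row of s at α₀
  have hdisj : ∀ β ∈ {β : Ω | (α₀, β) ∈ x}, ∀ β' ∈ {β : Ω | (α₀, β) ∈ x}, β ≠ β' →
      Disjoint ({γ : Ω | (β, γ) ∈ y}) ({γ : Ω | (β', γ) ∈ y}) := by
    intro β hβ β' hβ' hne
    rw [Set.disjoint_left]
    intro γ h1 h2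
    have hxx : (β, β') ∈ eqvClosure x := eqvClosure_trans_left hβ hβ'
    have hyy : (β, β') ∈ eqvClosure y := eqvClosure_trans_right h1 h2
    have hd : (β, β') ∈ rdiag Ω := by
      rw [← hmeet]
      exact ⟨hxx, hyy⟩
    exact hne hd
  have hdecomp : ({δ | (α₀, δ) ∈ s} : Set Ω).toFinset
      = ({β | (α₀, β) ∈ x} : Set Ω).toFinset.biUnion
          (fun β => ({γ | (β, γ) ∈ y} : Set Ω).toFinset) := by
    ext δ
    simp only [Set.mem_toFinset, Set.mem_setOf_eq, Finset.mem_biUnion]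
    rw [hcomp]
    constructor
    · rintro ⟨γ, h1, h2⟩
      exact ⟨γ, by simpa using h1, by simpa using h2⟩
    · rintro ⟨γ, h1, h2⟩
      exact ⟨γ, by simpa using h1, by simpa using h2⟩
  have hcard := congrArg Finset.card hdecomp
  rw [Finset.card_biUnion (by
    intro β hβ β' hβ' hne
    show Disjoint _ _
    rw [Set.disjoint_toFinset]
    exact hdisj β (by simpa using hβ) β' (by simpa using hβ') hne)] at hcard
  have hsum : ∑ β ∈ ({β | (α₀, β) ∈ x} : Set Ω).toFinset,
      (({γ | (β, γ) ∈ y} : Set Ω).toFinset.card)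
      = ({β | (α₀, β) ∈ x} : Set Ω).toFinset.card * valency y := by
    rw [Finset.sum_congr rfl (fun β hβ => ?_), Finset.sum_const, smul_eq_mul]
    rw [← Set.ncard_eq_toFinset_card']
    exact Nconst α₀ β (by simpa using hβ)
  rw [hsum] at hcard
  rw [valency_eq_row X hs ⟨δ₀, h0⟩, valency_eq_row X hx ⟨β₀, hb1⟩,
    Set.ncard_eq_toFinset_card', Set.ncard_eq_toFinset_card', hcard]

end Aux

/-- under the hypotheses of Statement 13, `d(s) = d(x)·d(y)`,
where `d(r) = n_r · n_{r*}`. -/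
theorem stmt14 {Ω : Type*} [Fintype Ω] (X : CohCfg Ω) (s x y : Set (Ω × Ω))
    (hs : s ∈ X.S) (hx : x ∈ X.S) (hy : y ∈ X.S)
    (hxi : Disjoint x (rdiag Ω)) (hyi : Disjoint y (rdiag Ω))
    (hcomp : s = rcomp x y)
    (hmeet : eqvClosure x ∩ eqvClosure y = rdiag Ω) :
    valency s * valency (rconv s)
      = (valency x * valency (rconv x)) * (valency y * valency (rconv y)) :=  by
  have hcomp' : rconv s = rcomp (rconv y) (rconv x) := by
    ext p
    constructor
    · intro hp
      have hp' : (p.2, p.1) ∈ s := hp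
      rw [hcomp] at hp'
      obtain ⟨γ, h1, h2⟩ := hp'
      exact ⟨γ, h2, h1⟩
    · rintro ⟨γ, h1, h2⟩
      show (p.2, p.1) ∈ s
      rw [hcomp]
      exact ⟨γ, h2, h1⟩
  have hmeet' : eqvClosure (rconv y) ∩ eqvClosure (rconv x) = rdiag Ω := by
    rw [eqvClosure_rconv, eqvClosure_rconv, Set.inter_comm]
    exact hmeet
  have h1 := key_valency X s x y hs hx hy hcomp hmeet
  have h2 := key_valency X (rconv s) (rconv y) (rconv x) (X.conv_mem s hs)
    (X.conv_mem y hy) (X.conv_mem x hx) hcomp' hmeet'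
  rw [h1, h2]
  ring
end
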